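/- Let G be a graph whose vertices are sign vectors on a finite set E_m with all components nonzero, where two vertices T and S are adjacent if and only if T⁺ ∪ S⁺ = E_m (T⁺ denotes the set of coordinates where T is +). If C is a cycle in G of odd length, then the vertex set of C is a committee: for every e ∈ E_m, strictly more than half of the vertices of C have a + in coordinate e. -/

import Mathlib

/-- Sign vectors with no zero components on `Fin m`, encoded as Boolean vectors
(`true` is `+`, `false` is `-`). -/
abbrev SV (m : ℕ) := Fin m → Bool

/-- The positive part of a sign vector. -/
def posPartSV {m : ℕ} (X : SV m) : Finset (Fin m) :=
  Finset.univ.filter (fun e => X e = true)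

/-- The separation set of two sign vectors (no zero components). -/
def sep {m : ℕ} (X Y : SV m) : Finset (Fin m) :=
  Finset.univ.filter (fun e => X e ≠ Y e)

/-- A finite set of sign vectors is a committee if for every coordinate `e`,
strictly more than half of its elements have a `+` at `e`. -/
def isCommitteeB {m : ℕ} (K : Finset (SV m)) : Prop :=
  ∀ e : Fin m, (K.card : ℚ) / 2 < ((K.filter (fun X => X e = true)).card : ℚ)

/-- The elements of a family whose positive parts are inclusion-maximal. -/
def maxPlus {m : ℕ} (V : Finset (SV m)) : Finset (SV m) :=
  V.filter (fun X => ∀ Y ∈ V, ¬ posPartSV X ⊂ posPartSV Y)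

theorem stmt_4 {m k : ℕ} (hk : 1 ≤ k) (v : Fin (2 * k + 1) → SV m)
    (hinj : Function.Injective v)
    (hadj : ∀ i : Fin (2 * k + 1),
      posPartSV (v i) ∪ posPartSV (v (i + 1)) = Finset.univ) :
    isCommitteeB (Finset.univ.image v) := by
  intro e
  have hmap : ∀ i : Fin (2*k+1), v i e = false → v (i+1) e = true := by
    intro i hi
    have he : e ∈ posPartSV (v i) ∪ posPartSV (v (i + 1)) := by
      rw [hadj i]; exact Finset.mem_univ e
    rw [Finset.mem_union] at he
    simp only [posPartSV, Finset.mem_filter, Finset.mem_univ, true_and] at he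
    rcases he with h | h
    · rw [hi] at h; simp at h
    · exact h
  have hF : (Finset.univ.filter (fun i : Fin (2*k+1) => ¬ (v i e = true))).card ≤
      (Finset.univ.filter (fun i : Fin (2*k+1) => v i e = true)).card := by
    apply Finset.card_le_card_of_injOn (fun i => i + 1)
    · intro i hi
      simp only [Finset.mem_filter, Finset.mem_univ, true_and] at hi ⊢
      simpa using hmap i (by simpa using hi)
    · intro a _ b _ h
      exact add_left_injective 1 h
  have hsplit : (Finset.univ.filter (fun i : Fin (2*k+1) => v i e = true)).card +
      (Finset.univ.filter (fun i : Fin (2*k+1) => ¬ (v i e = true))).card = 2*k+1 := by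
    rw [Finset.card_filter_add_card_filter_not, Finset.card_univ, Fintype.card_fin]
  have h1 : (Finset.univ.image v).card = 2*k+1 := by
    rw [Finset.card_image_of_injective _ hinj, Finset.card_univ, Fintype.card_fin]
  have h2 : ((Finset.univ.image v).filter (fun X => X e = true)).card =
      (Finset.univ.filter (fun i : Fin (2*k+1) => v i e = true)).card := by
    rw [Finset.filter_image, Finset.card_image_of_injective _ hinj]
  rw [h1, h2, div_lt_iff₀ (by norm_num : (0:ℚ) < 2)]
  have habs : ∀ a b : ℕ, b ≤ a → a + b = 2*k+1 → (2*k+1 : ℕ) < a * 2 := by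
    intro a b ha hb
    clear * - ha hb
    omega
  exact_mod_cast habs _ _ hF hsplit
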